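/- Let P and Q be probability measures on a measurable space Ω with P absolutely continuous with respect to Q. Then the Kullback–Leibler divergence admits the dual (Donsker–Varadhan) representation D_KL(P‖Q) = sup_T ( E_P[T] − log E_Q[e^T] ), where the supremum is taken over all measurable functions T : Ω → ℝ such that both expectations E_P[T] and E_Q[e^T] are finite. -/

import Mathlib

open MeasureTheory

/-- Kullback–Leibler divergence `D_KL(P‖Q) = E_P[log (dP/dQ)]`. -/
noncomputable def klDiv {Ω : Type*} [MeasurableSpace Ω] (P Q : Measure Ω) : ℝ :=
  ∫ x, Real.log ((P.rnDeriv Q) x).toReal ∂P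

section DVHelpers

open Measure

variable {Ω : Type*} [MeasurableSpace Ω]


/-- negative part of log-likelihood is P-integrable -/
lemma dv_negpart_integrable (P Q : Measure Ω) [IsProbabilityMeasure P] [IsProbabilityMeasure Q]
    (hPQ : P ≪ Q) :
    Integrable (fun x => max (-(Real.log ((P.rnDeriv Q) x).toReal)) 0) P := by
  set L : Ω → ℝ := fun x => Real.log ((P.rnDeriv Q) x).toReal with hL
  have hLmeas : Measurable L := (Measure.measurable_rnDeriv P Q).ennreal_toReal.log
  have hmeas : Measurable (fun x => max (-(L x)) 0) := hLmeas.neg.max measurable_const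
  refine ⟨hmeas.aestronglyMeasurable, ?_⟩
  refine (hasFiniteIntegral_iff_ofReal
    (Filter.Eventually.of_forall fun x => le_max_right _ _)).mpr ?_
  have hkey : ∫⁻ x, ENNReal.ofReal (max (-(L x)) 0) ∂P
      = ∫⁻ x, (P.rnDeriv Q) x * ENNReal.ofReal (max (-(L x)) 0) ∂Q := by
    rw [MeasureTheory.lintegral_rnDeriv_mul hPQ
      (hmeas.ennreal_ofReal.aemeasurable)]
  refine lt_of_le_of_lt (le_of_eq hkey) ?_
  have hbound : ∀ᵐ x ∂Q, (P.rnDeriv Q) x * ENNReal.ofReal (max (-(L x)) 0) ≤ 1 := by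
    filter_upwards [Measure.rnDeriv_lt_top P Q] with x hx
    set t : ℝ := ((P.rnDeriv Q) x).toReal with ht
    have ht0 : 0 ≤ t := ENNReal.toReal_nonneg
    have hxr : (P.rnDeriv Q) x = ENNReal.ofReal t := by
      rw [ht, ENNReal.ofReal_toReal hx.ne]
    rw [hxr, ← ENNReal.ofReal_mul ht0, ← ENNReal.ofReal_one]
    apply ENNReal.ofReal_le_ofReal
    rcases le_or_gt 1 t with h1 | h1
    · have : Real.log t ≥ 0 := Real.log_nonneg h1
      have : max (-(L x)) 0 = 0 := max_eq_right (by simpa [hL, ← ht] using neg_nonpos.mpr this)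
      simp [this]
    rcases eq_or_lt_of_le ht0 with h0 | h0
    · simp [← h0]
    · have hlog : -(Real.log t) = Real.log t⁻¹ := (Real.log_inv t).symm
      have : Real.log t⁻¹ ≤ t⁻¹ - 1 := Real.log_le_sub_one_of_pos (by positivity)
      have hle : max (-(L x)) 0 ≤ max (t⁻¹ - 1) 0 := by
        apply max_le_max _ le_rfl
        rw [hL]; simp only [← ht]; rw [hlog]; exact this
      calc t * max (-(L x)) 0 ≤ t * max (t⁻¹ - 1) 0 := by
            exact mul_le_mul_of_nonneg_left hle ht0
        _ ≤ 1 := by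
            rcases le_or_gt t⁻¹ 1 with h | h
            · rw [max_eq_right (by linarith)]; simp
            · rw [max_eq_left (by linarith)]
              have : t * (t⁻¹ - 1) = 1 - t := by
                field_simp
              rw [this]; linarith
  calc ∫⁻ x, (P.rnDeriv Q) x * ENNReal.ofReal (max (-(L x)) 0) ∂Q
      ≤ ∫⁻ _, 1 ∂Q := lintegral_mono_ae hbound
    _ = 1 := by simp
    _ < ⊤ := ENNReal.one_lt_top


lemma dv_le (P Q : Measure Ω) [IsProbabilityMeasure P] [IsProbabilityMeasure Q]
    (hPQ : P ≪ Q)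
    (hInt : Integrable (fun x => Real.log ((P.rnDeriv Q) x).toReal) P)
    {T : Ω → ℝ} (hT : Measurable T) (hT1 : Integrable T P)
    (hT2 : Integrable (fun x => Real.exp (T x)) Q) :
    (∫ x, T x ∂P) - Real.log (∫ x, Real.exp (T x) ∂Q)
      ≤ ∫ x, Real.log ((P.rnDeriv Q) x).toReal ∂P := by
  set L : Ω → ℝ := fun x => Real.log ((P.rnDeriv Q) x).toReal with hL
  have hLmeas : Measurable L := (Measure.measurable_rnDeriv P Q).ennreal_toReal.log
  set g : Ω → ℝ := fun x => T x - L x with hg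
  have hgmeas : Measurable g := hT.sub hLmeas
  have hgInt : Integrable g P := hT1.sub hInt
  -- lintegral computation
  have hkey : ∫⁻ x, ENNReal.ofReal (Real.exp (g x)) ∂P
      = ∫⁻ x, (P.rnDeriv Q) x * ENNReal.ofReal (Real.exp (g x)) ∂Q :=
    (MeasureTheory.lintegral_rnDeriv_mul hPQ
      ((hgmeas.exp).ennreal_ofReal.aemeasurable)).symm
  have hptwise : ∀ᵐ x ∂Q,
      (P.rnDeriv Q) x * ENNReal.ofReal (Real.exp (g x)) ≤ ENNReal.ofReal (Real.exp (T x)) := by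
    filter_upwards [Measure.rnDeriv_lt_top P Q] with x hx
    set t : ℝ := ((P.rnDeriv Q) x).toReal with ht
    have hxr : (P.rnDeriv Q) x = ENNReal.ofReal t := by
      rw [ht, ENNReal.ofReal_toReal hx.ne]
    rcases eq_or_lt_of_le (ENNReal.toReal_nonneg : (0:ℝ) ≤ t) with h0 | h0
    · rw [hxr, ht, ← h0]; simp
    · rw [hxr, ← ENNReal.ofReal_mul (le_of_lt h0)]
      apply ENNReal.ofReal_le_ofReal
      have : Real.exp (g x) = Real.exp (T x) / t := by
        rw [hg]; simp only
        rw [Real.exp_sub, hL]; simp only [← ht]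
        rw [Real.exp_log h0]
      rw [this, mul_div_cancel₀ _ (ne_of_gt h0)]
  have hfin : ∫⁻ x, ENNReal.ofReal (Real.exp (T x)) ∂Q
      = ENNReal.ofReal (∫ x, Real.exp (T x) ∂Q) := by
    rw [MeasureTheory.ofReal_integral_eq_lintegral_ofReal hT2
      (Filter.Eventually.of_forall fun x => (Real.exp_pos _).le)]
  have hle : ∫⁻ x, ENNReal.ofReal (Real.exp (g x)) ∂P
      ≤ ENNReal.ofReal (∫ x, Real.exp (T x) ∂Q) := by
    rw [hkey, ← hfin]; exact lintegral_mono_ae hptwise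
  have hexpgInt : Integrable (fun x => Real.exp (g x)) P := by
    refine ⟨(hgmeas.exp).aestronglyMeasurable, ?_⟩
    refine (hasFiniteIntegral_iff_ofReal
      (Filter.Eventually.of_forall fun x => (Real.exp_pos _).le)).mpr ?_
    exact lt_of_le_of_lt hle ENNReal.ofReal_lt_top
  have hint_le : ∫ x, Real.exp (g x) ∂P ≤ ∫ x, Real.exp (T x) ∂Q := by
    rw [MeasureTheory.integral_eq_lintegral_of_nonneg_ae
      (Filter.Eventually.of_forall fun x => (Real.exp_pos _).le)
      (hgmeas.exp).aestronglyMeasurable]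
    calc (∫⁻ x, ENNReal.ofReal (Real.exp (g x)) ∂P).toReal
        ≤ (ENNReal.ofReal (∫ x, Real.exp (T x) ∂Q)).toReal :=
          ENNReal.toReal_mono ENNReal.ofReal_ne_top hle
      _ ≤ ∫ x, Real.exp (T x) ∂Q := by
          rw [ENNReal.toReal_ofReal']; exact max_le le_rfl (integral_nonneg fun x => (Real.exp_pos _).le)
  -- Jensen
  have hjensen : Real.exp (∫ x, g x ∂P) ≤ ∫ x, Real.exp (g x) ∂P := by
    have := convexOn_exp.map_integral_le (μ := P)
      Real.continuous_exp.continuousOn isClosed_univ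
      (Filter.Eventually.of_forall fun x => Set.mem_univ (g x)) hgInt ?_
    · exact this
    · exact hexpgInt
  have hpos : 0 < ∫ x, Real.exp (T x) ∂Q :=
    lt_of_lt_of_le (lt_of_lt_of_le (Real.exp_pos _) hjensen) hint_le
  have : ∫ x, g x ∂P ≤ Real.log (∫ x, Real.exp (T x) ∂Q) :=
    (Real.le_log_iff_exp_le hpos).mpr (le_trans hjensen hint_le)
  have hsub : ∫ x, g x ∂P = (∫ x, T x ∂P) - ∫ x, L x ∂P := integral_sub hT1 hInt
  linarith [this, hsub.symm.le]



lemma dv_approx (P Q : Measure Ω) [IsProbabilityMeasure P] [IsProbabilityMeasure Q]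
    (hPQ : P ≪ Q)
    (hInt : Integrable (fun x => Real.log ((P.rnDeriv Q) x).toReal) P) (n : ℕ) :
    (klDiv P Q - Real.log (1 + Real.exp (-(n:ℝ)) * (Q {x | P.rnDeriv Q x = 0}).toReal)) ∈
      {r : ℝ | ∃ T : Ω → ℝ, Measurable T ∧ Integrable T P ∧
        Integrable (fun x => Real.exp (T x)) Q ∧
        r = (∫ x, T x ∂P) - Real.log (∫ x, Real.exp (T x) ∂Q)} := by
  set L : Ω → ℝ := fun x => Real.log ((P.rnDeriv Q) x).toReal with hL
  have hLmeas : Measurable L := (Measure.measurable_rnDeriv P Q).ennreal_toReal.log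
  set S0 : Set Ω := {x | P.rnDeriv Q x = 0} with hS0
  have hS0meas : MeasurableSet S0 := Measure.measurable_rnDeriv P Q (measurableSet_singleton 0)
  set χ : Ω → ℝ := S0.indicator (fun _ => (1:ℝ)) with hχ
  have hχmeas : Measurable χ := measurable_const.indicator hS0meas
  have hχIntP : Integrable χ P := (integrable_const (1:ℝ)).indicator hS0meas
  have hχIntQ : Integrable χ Q := (integrable_const (1:ℝ)).indicator hS0meas
  set T : Ω → ℝ := fun x => L x - (n:ℝ) * χ x with hT
  have hTmeas : Measurable T := hLmeas.sub (measurable_const.mul hχmeas)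
  have hTInt : Integrable T P := hInt.sub (hχIntP.const_mul _)
  -- χ is P-a.e. zero
  have hχ0 : χ =ᵐ[P] 0 := by
    filter_upwards [Measure.rnDeriv_pos hPQ] with x hx
    have : x ∉ S0 := fun h => absurd (hS0 ▸ h) (by simpa using hx.ne')
    simp [hχ, Set.indicator_of_notMem this]
  have hTP : ∫ x, T x ∂P = klDiv P Q := by
    have : T =ᵐ[P] L := by
      filter_upwards [hχ0] with x hx
      simp [hT, hx]
    rw [integral_congr_ae this]; rfl
  -- exp ∘ T decomposition Q-a.e.
  have hdecomp : (fun x => Real.exp (T x)) =ᵐ[Q]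
      (fun x => ((P.rnDeriv Q) x).toReal + Real.exp (-(n:ℝ)) * χ x) := by
    filter_upwards [Measure.rnDeriv_lt_top P Q] with x hx
    by_cases hx0 : x ∈ S0
    · have h0 : (P.rnDeriv Q) x = 0 := hx0
      simp only [hT, hL, hχ, Set.indicator_of_mem hx0, h0]
      simp [Real.exp_neg]
    · have h0 : (P.rnDeriv Q) x ≠ 0 := hx0
      have ht : 0 < ((P.rnDeriv Q) x).toReal := ENNReal.toReal_pos h0 hx.ne
      simp only [hT, hL, hχ, Set.indicator_of_notMem hx0]
      simp [Real.exp_log ht]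
  have hRInt : Integrable (fun x => ((P.rnDeriv Q) x).toReal + Real.exp (-(n:ℝ)) * χ x) Q :=
    (Measure.integrable_toReal_rnDeriv).add (hχIntQ.const_mul _)
  have hexpInt : Integrable (fun x => Real.exp (T x)) Q := hRInt.congr hdecomp.symm
  have hexpVal : ∫ x, Real.exp (T x) ∂Q
      = 1 + Real.exp (-(n:ℝ)) * (Q S0).toReal := by
    rw [integral_congr_ae hdecomp, integral_add Measure.integrable_toReal_rnDeriv
      (hχIntQ.const_mul _), Measure.integral_toReal_rnDeriv hPQ]
    rw [integral_const_mul, hχ, integral_indicator_const _ hS0meas]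
    simp
    rfl
  exact ⟨T, hTmeas, hTInt, hexpInt, by rw [hTP, hexpVal]⟩


lemma dv_unbounded (P Q : Measure Ω) [IsProbabilityMeasure P] [IsProbabilityMeasure Q]
    (hPQ : P ≪ Q)
    (hInt : ¬ Integrable (fun x => Real.log ((P.rnDeriv Q) x).toReal) P)
    (hNeg : Integrable (fun x => max (-(Real.log ((P.rnDeriv Q) x).toReal)) 0) P) :
    ¬ BddAbove {r : ℝ | ∃ T : Ω → ℝ, Measurable T ∧ Integrable T P ∧
        Integrable (fun x => Real.exp (T x)) Q ∧
        r = (∫ x, T x ∂P) - Real.log (∫ x, Real.exp (T x) ∂Q)} := by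
  set L : Ω → ℝ := fun x => Real.log ((P.rnDeriv Q) x).toReal with hL
  have hLmeas : Measurable L := (Measure.measurable_rnDeriv P Q).ennreal_toReal.log
  set Lp : Ω → ℝ := fun x => max (L x) 0 with hLp
  set Lm : Ω → ℝ := fun x => max (-(L x)) 0 with hLm
  have hLpmeas : Measurable Lp := hLmeas.max measurable_const
  have hLmmeas : Measurable Lm := hLmeas.neg.max measurable_const
  have hLp0 : ∀ x, 0 ≤ Lp x := fun x => le_max_right _ _
  -- Lp is not integrable
  have hLpNotInt : ¬ Integrable Lp P := by
    intro h
    apply hInt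
    have : L = fun x => Lp x - Lm x := by
      funext x; simp [hLp, hLm, max_zero_sub_max_neg_zero_eq_self]
    rw [this]
    exact h.sub hNeg
  -- lintegral of Lp is infinite
  have hLpTop : ∫⁻ x, ENNReal.ofReal (Lp x) ∂P = ⊤ := by
    by_contra h
    exact hLpNotInt ⟨hLpmeas.aestronglyMeasurable,
      (hasFiniteIntegral_iff_ofReal (Filter.Eventually.of_forall hLp0)).mpr
        (lt_top_iff_ne_top.mpr h)⟩
  -- monotone convergence: truncations exhaust
  have hsup : ⨆ n : ℕ, ∫⁻ x, ENNReal.ofReal (min (Lp x) n) ∂P = ⊤ := by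
    have hmono : Monotone (fun (n : ℕ) (x : Ω) => ENNReal.ofReal (min (Lp x) n)) := by
      intro a b hab
      intro x
      exact ENNReal.ofReal_le_ofReal (min_le_min le_rfl (by exact_mod_cast hab))
    rw [← lintegral_iSup (fun n => (hLpmeas.min measurable_const).ennreal_ofReal) hmono]
    rw [← hLpTop]
    congr 1
    funext x
    apply le_antisymm
    · exact iSup_le fun n => ENNReal.ofReal_le_ofReal (min_le_left _ _)
    · refine le_iSup_of_le ⌈Lp x⌉₊ ?_
      rw [min_eq_left (Nat.le_ceil _)]
  -- truncation integrals are finite and exceed any bound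
  have htruncfin : ∀ n : ℕ, ∫⁻ x, ENNReal.ofReal (min (Lp x) n) ∂P ≠ ⊤ := by
    intro n
    refine ne_top_of_le_ne_top ?_ (lintegral_mono (fun x =>
      ENNReal.ofReal_le_ofReal (min_le_right (Lp x) (n:ℝ))))
    simp [lintegral_const]
  have htruncInt : ∀ n : ℕ, Integrable (fun x => min (Lp x) n) P := by
    intro n
    refine ⟨(hLpmeas.min measurable_const).aestronglyMeasurable, ?_⟩
    refine (hasFiniteIntegral_iff_ofReal (Filter.Eventually.of_forall fun x =>
      le_min (hLp0 x) (n.cast_nonneg))).mpr (lt_top_iff_ne_top.mpr (htruncfin n))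
  have hbig : ∀ M : ℝ, ∃ n : ℕ, M < ∫ x, min (Lp x) n ∂P := by
    intro M
    have : ENNReal.ofReal M < ⨆ n : ℕ, ∫⁻ x, ENNReal.ofReal (min (Lp x) n) ∂P := by
      rw [hsup]; exact ENNReal.ofReal_lt_top
    obtain ⟨n, hn⟩ := lt_iSup_iff.mp this
    refine ⟨n, ?_⟩
    have heq : ∫ x, min (Lp x) n ∂P
        = (∫⁻ x, ENNReal.ofReal (min (Lp x) n) ∂P).toReal := by
      rw [MeasureTheory.integral_eq_lintegral_of_nonneg_ae (Filter.Eventually.of_forall fun x =>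
        le_min (hLp0 x) (n.cast_nonneg)) (hLpmeas.min measurable_const).aestronglyMeasurable]
    rw [heq]
    calc M ≤ (ENNReal.ofReal M).toReal := by
          rw [ENNReal.toReal_ofReal']; exact le_max_left _ _
      _ < _ := ENNReal.toReal_strict_mono (htruncfin n) hn
  -- the truncated functions
  rintro ⟨M, hM⟩
  obtain ⟨n, hn⟩ := hbig (M + (∫ x, Lm x ∂P) + Real.log 2)
  set T : Ω → ℝ := fun x => max (min (L x) n) (-(n:ℝ)) with hT
  have hTmeas : Measurable T := (hLmeas.min measurable_const).max measurable_const
  have hTbd : ∀ x, ‖T x‖ ≤ (n:ℝ) := by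
    intro x
    rw [Real.norm_eq_abs, abs_le]
    exact ⟨le_max_right _ _, max_le (le_trans (min_le_right _ _) le_rfl)
      (neg_le_self n.cast_nonneg)⟩
  have hTInt : Integrable T P :=
    (integrable_const ((n:ℝ))).mono' hTmeas.aestronglyMeasurable
      (Filter.Eventually.of_forall hTbd)
  have hexpbd : ∀ x, ‖Real.exp (T x)‖ ≤ Real.exp n := by
    intro x
    rw [Real.norm_eq_abs, abs_of_pos (Real.exp_pos _)]
    exact Real.exp_le_exp.mpr (le_trans (le_abs_self _) (by simpa [Real.norm_eq_abs] using hTbd x))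
  have hexpInt : Integrable (fun x => Real.exp (T x)) Q :=
    (integrable_const (Real.exp n)).mono' hTmeas.exp.aestronglyMeasurable
      (Filter.Eventually.of_forall hexpbd)
  -- lower bound on ∫ exp T dQ
  have hexp_lb : Real.exp (-(n:ℝ)) ≤ ∫ x, Real.exp (T x) ∂Q := by
    calc Real.exp (-(n:ℝ)) = ∫ _, Real.exp (-(n:ℝ)) ∂Q := by simp
      _ ≤ ∫ x, Real.exp (T x) ∂Q := integral_mono (integrable_const _) hexpInt
          (fun x => Real.exp_le_exp.mpr (le_max_right _ _))
  have hexp_pos : 0 < ∫ x, Real.exp (T x) ∂Q := lt_of_lt_of_le (Real.exp_pos _) hexp_lb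
  -- upper bound on ∫ exp T dQ
  have hexp_ub : ∫ x, Real.exp (T x) ∂Q ≤ 2 := by
    have hptw : ∀ᵐ x ∂Q, Real.exp (T x) ≤ ((P.rnDeriv Q) x).toReal + 1 := by
      filter_upwards [Measure.rnDeriv_lt_top P Q] with x hx
      set t : ℝ := ((P.rnDeriv Q) x).toReal with ht
      have ht0 : 0 ≤ t := ENNReal.toReal_nonneg
      rcases le_or_gt (L x) 0 with h | h
      · have : T x ≤ 0 := max_le (le_trans (min_le_left _ _) h) (neg_nonpos.mpr n.cast_nonneg)
        calc Real.exp (T x) ≤ Real.exp 0 := Real.exp_le_exp.mpr this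
          _ = 1 := Real.exp_zero
          _ ≤ t + 1 := by linarith
      · have htpos : 0 < t := by
          by_contra hc
          push_neg at hc
          have : t = 0 := le_antisymm hc ht0
          rw [hL] at h; simp only [← ht] at h
          rw [this] at h; simp [Real.log_zero] at h
        have : T x ≤ L x := max_le (min_le_left _ _) (le_trans (neg_nonpos.mpr n.cast_nonneg) h.le)
        calc Real.exp (T x) ≤ Real.exp (L x) := Real.exp_le_exp.mpr this
          _ = t := by rw [hL]; simp only [← ht]; exact Real.exp_log htpos
          _ ≤ t + 1 := by linarith
    calc ∫ x, Real.exp (T x) ∂Q ≤ ∫ x, (((P.rnDeriv Q) x).toReal + 1) ∂Q :=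
          integral_mono_ae hexpInt (Measure.integrable_toReal_rnDeriv.add (integrable_const 1)) hptw
      _ = 2 := by
          rw [integral_add Measure.integrable_toReal_rnDeriv (integrable_const 1),
            Measure.integral_toReal_rnDeriv hPQ]
          norm_num
  have hlog_ub : Real.log (∫ x, Real.exp (T x) ∂Q) ≤ Real.log 2 :=
    Real.log_le_log hexp_pos hexp_ub
  -- lower bound on ∫ T dP
  have hTlow : ∀ x, min (Lp x) n - Lm x ≤ T x := by
    intro x
    rcases le_total 0 (L x) with h | h
    · have h1 : Lp x = L x := max_eq_left h
      have h2 : Lm x = 0 := max_eq_right (neg_nonpos.mpr h)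
      rw [h1, h2, sub_zero, hT]
      exact le_max_left _ _
    · have h1 : Lp x = 0 := max_eq_right h
      have h2 : Lm x = -(L x) := max_eq_left (by linarith [neg_nonneg.mpr h])
      rw [h1, h2, hT]
      have : min (0:ℝ) n = 0 := min_eq_left n.cast_nonneg
      rw [this, _root_.zero_sub, neg_neg]
      calc L x = min (L x) n := (min_eq_left (le_trans h n.cast_nonneg)).symm
        _ ≤ max (min (L x) n) (-(n:ℝ)) := le_max_left _ _
  have hTint_lb : (∫ x, min (Lp x) n ∂P) - (∫ x, Lm x ∂P) ≤ ∫ x, T x ∂P := by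
    rw [← integral_sub (htruncInt n) hNeg]
    exact integral_mono ((htruncInt n).sub hNeg) hTInt hTlow
  -- conclude
  have hmem : (∫ x, T x ∂P) - Real.log (∫ x, Real.exp (T x) ∂Q) ≤ M :=
    hM ⟨T, hTmeas, hTInt, hexpInt, rfl⟩
  have : M < (∫ x, T x ∂P) - Real.log (∫ x, Real.exp (T x) ∂Q) := by
    have h2 : Real.log 2 ≥ Real.log (∫ x, Real.exp (T x) ∂Q) := hlog_ub
    linarith [hTint_lb, hn]
  linarith

end DVHelpers

/-- Donsker–Varadhan dual representation of the KL divergence: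
`D_KL(P‖Q) = sup_T ( E_P[T] − log E_Q[e^T] )`, the supremum being over all
measurable `T : Ω → ℝ` with `E_P[T]` and `E_Q[e^T]` finite. -/
theorem klDiv_eq_sSup_donsker_varadhan {Ω : Type*} [MeasurableSpace Ω]
    (P Q : Measure Ω) [IsProbabilityMeasure P] [IsProbabilityMeasure Q]
    (hPQ : P ≪ Q) :
    klDiv P Q = sSup {r : ℝ | ∃ T : Ω → ℝ, Measurable T ∧
      Integrable T P ∧ Integrable (fun x => Real.exp (T x)) Q ∧
      r = (∫ x, T x ∂P) - Real.log (∫ x, Real.exp (T x) ∂Q)} := by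
  set S : Set ℝ := {r : ℝ | ∃ T : Ω → ℝ, Measurable T ∧
      Integrable T P ∧ Integrable (fun x => Real.exp (T x)) Q ∧
      r = (∫ x, T x ∂P) - Real.log (∫ x, Real.exp (T x) ∂Q)} with hS
  by_cases hInt : Integrable (fun x => Real.log ((P.rnDeriv Q) x).toReal) P
  · -- KL is finite
    have hub : ∀ r ∈ S, r ≤ klDiv P Q := by
      rintro r ⟨T, hT, hT1, hT2, rfl⟩
      exact dv_le P Q hPQ hInt hT hT1 hT2
    have hbdd : BddAbove S := ⟨klDiv P Q, hub⟩
    have hne : S.Nonempty := by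
      refine ⟨0, (fun _ => (0:ℝ)), measurable_const, integrable_const 0, by
        simpa using (integrable_const (1:ℝ)), ?_⟩
      simp
    refine le_antisymm ?_ (csSup_le hne hub)
    set c : ℝ := (Q {x | P.rnDeriv Q x = 0}).toReal with hc
    have happrox : ∀ n : ℕ,
        klDiv P Q - Real.log (1 + Real.exp (-(n:ℝ)) * c) ∈ S :=
      fun n => dv_approx P Q hPQ hInt n
    have htend : Filter.Tendsto
        (fun n : ℕ => klDiv P Q - Real.log (1 + Real.exp (-(n:ℝ)) * c))
        Filter.atTop (nhds (klDiv P Q)) := by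
      have h1 : Filter.Tendsto (fun n : ℕ => Real.exp (-(n:ℝ)))
          Filter.atTop (nhds 0) :=
        Real.tendsto_exp_atBot.comp
          (Filter.tendsto_neg_atBot_iff.mpr tendsto_natCast_atTop_atTop)
      have h2 : Filter.Tendsto (fun n : ℕ => 1 + Real.exp (-(n:ℝ)) * c)
          Filter.atTop (nhds 1) := by
        have := (tendsto_const_nhds (x := (1:ℝ))
          (f := Filter.atTop (α := ℕ))).add (h1.mul_const c)
        norm_num at this
        exact this
      have h3 : Filter.Tendsto
          (fun n : ℕ => Real.log (1 + Real.exp (-(n:ℝ)) * c))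
          Filter.atTop (nhds 0) := by
        have := (Real.continuousAt_log one_ne_zero).tendsto.comp h2
        simpa [Function.comp_def] using this
      simpa using (tendsto_const_nhds (x := klDiv P Q)
        (f := Filter.atTop (α := ℕ))).sub h3
    exact le_of_tendsto' htend (fun n => le_csSup hbdd (happrox n))
  · -- KL is infinite: both sides are the junk value 0
    have h1 : klDiv P Q = 0 := integral_undef hInt
    have h2 : ¬ BddAbove S :=
      dv_unbounded P Q hPQ hInt (dv_negpart_integrable P Q hPQ)
    rw [h1, Real.sSup_of_not_bddAbove h2]
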